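/- arXiv:2507.08838 — 2 statements merged into one kernel-verified Lean document; each statement's English description precedes it below -/
import Mathlib

section
/- Let π_old and π be policies (conditional probability distributions over actions given states) for a finite MDP with discount factor γ ∈ [0,1) and reward bounded so that the advantage function A^{π_old} is bounded. Define the surrogate L_{π_old}(π) = η(π_old) + E_{s∼ρ_{π_old}, a∼π(·|s)}[A^{π_old}(s,a)] and C = 4·max_{s,a}|A^{π_old}(s,a)|·γ/(1−γ)². Then η(π) ≥ L_{π_old}(π) − C·(max_s D_TV(π_old(·|s), π(·|s)))². -/
def IsProb {O : Type*} [Fintype O] (p : O → ℝ) : Prop :=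
  (∀ o, 0 ≤ p o) ∧ ∑ o, p o = 1

noncomputable def tvDist {O : Type*} [Fintype O] (p q : O → ℝ) : ℝ :=
  (1 / 2) * ∑ o, |p o - q o|

section MDP

variable {S Act : Type*} [Fintype S] [Fintype Act]

/-- State distribution at time `t` when starting from `μ0` and following policy `π`
in the MDP with transition kernel `P`. -/
noncomputable def stateDist (μ0 : S → ℝ) (P : S → Act → S → ℝ)
    (π : S → Act → ℝ) : ℕ → S → ℝ
  | 0 => μ0
  | t + 1 => fun s' => ∑ s, ∑ a, stateDist μ0 P π t s * π s a * P s a s'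

/-- Expected reward collected at time `t`. -/
noncomputable def expReward (μ0 : S → ℝ) (P : S → Act → S → ℝ)
    (r : S → Act → S → ℝ) (π : S → Act → ℝ) (t : ℕ) : ℝ :=
  ∑ s, ∑ a, ∑ s', stateDist μ0 P π t s * π s a * P s a s' * r s a s'

/-- Expected discounted return `η(π)` from initial distribution `μ0`. -/
noncomputable def expReturn (μ0 : S → ℝ) (P : S → Act → S → ℝ)
    (r : S → Act → S → ℝ) (γ : ℝ) (π : S → Act → ℝ) : ℝ :=
  ∑' t : ℕ, γ ^ t * expReward μ0 P r π t

/-- Value function `V^π(s)`: expected discounted return started at `s`. -/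
noncomputable def valueFun [DecidableEq S] (P : S → Act → S → ℝ)
    (r : S → Act → S → ℝ) (γ : ℝ) (π : S → Act → ℝ) (s : S) : ℝ :=
  expReturn (fun s' => if s' = s then 1 else 0) P r γ π

/-- Action-value function `Q^π(s,a)`. -/
noncomputable def qFun [DecidableEq S] (P : S → Act → S → ℝ)
    (r : S → Act → S → ℝ) (γ : ℝ) (π : S → Act → ℝ) (s : S) (a : Act) : ℝ :=
  ∑ s', P s a s' * (r s a s' + γ * valueFun P r γ π s')

/-- Advantage function `A^π(s,a) = Q^π(s,a) − V^π(s)`. -/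
noncomputable def advFun [DecidableEq S] (P : S → Act → S → ℝ)
    (r : S → Act → S → ℝ) (γ : ℝ) (π : S → Act → ℝ) (s : S) (a : Act) : ℝ :=
  qFun P r γ π s a - valueFun P r γ π s

/-- Unnormalized discounted state visitation distribution `ρ_π`. -/
noncomputable def visitDist (μ0 : S → ℝ) (P : S → Act → S → ℝ) (γ : ℝ)
    (π : S → Act → ℝ) (s : S) : ℝ :=
  ∑' t : ℕ, γ ^ t * stateDist μ0 P π t s

end MDP

open Filter Topology Finset

section Aux
variable {S Act : Type*} [Fintype S] [Fintype Act]

/-- one-step state distribution update -/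
noncomputable def stepD (P : S → Act → S → ℝ) (π : S → Act → ℝ) (μ : S → ℝ) : S → ℝ :=
  fun s' => ∑ s, ∑ a, μ s * π s a * P s a s'

lemma stateDist_succ (μ0 : S → ℝ) (P : S → Act → S → ℝ) (π : S → Act → ℝ) (t : ℕ) :
    stateDist μ0 P π (t + 1) = stepD P π (stateDist μ0 P π t) := rfl

lemma stateDist_shift (μ0 : S → ℝ) (P : S → Act → S → ℝ) (π : S → Act → ℝ) (t : ℕ) :
    stateDist μ0 P π (t + 1) = stateDist (stepD P π μ0) P π t := by
  induction t with
  | zero => rfl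
  | succ t ih => rw [stateDist_succ, ih, ← stateDist_succ]

lemma stateDist_isProb (μ0 : S → ℝ) (hμ0 : IsProb μ0) (P : S → Act → S → ℝ)
    (hP : ∀ s a, IsProb (P s a)) (π : S → Act → ℝ) (hπ : ∀ s, IsProb (π s)) (t : ℕ) :
    IsProb (stateDist μ0 P π t) := by
  induction t with
  | zero => exact hμ0
  | succ t ih =>
    constructor
    · intro s'
      apply Finset.sum_nonneg; intro s _
      apply Finset.sum_nonneg; intro a _
      exact mul_nonneg (mul_nonneg (ih.1 s) ((hπ s).1 a)) ((hP s a).1 s')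
    · show ∑ s', ∑ s, ∑ a, stateDist μ0 P π t s * π s a * P s a s' = 1
      rw [Finset.sum_comm]
      have : ∀ s ∈ Finset.univ, ∑ s' : S, ∑ a, stateDist μ0 P π t s * π s a * P s a s'
          = stateDist μ0 P π t s := by
        intro s _
        rw [Finset.sum_comm]
        have : ∀ a ∈ Finset.univ, ∑ s' : S, stateDist μ0 P π t s * π s a * P s a s'
            = stateDist μ0 P π t s * π s a := by
          intro a _
          rw [← Finset.mul_sum, (hP s a).2, mul_one]
        rw [Finset.sum_congr rfl this, ← Finset.mul_sum, (hπ s).2, mul_one]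
      rw [Finset.sum_congr rfl this, ih.2]

lemma sum_swap3 {A B D : Type*} [Fintype A] [Fintype B] [Fintype D]
    (f : A → B → D → ℝ) :
    ∑ a, ∑ b, ∑ d, f a b d = ∑ d, ∑ a, ∑ b, f a b d := by
  have h1 : ∀ a, ∑ b, ∑ d, f a b d = ∑ d, ∑ b, f a b d := fun a => Finset.sum_comm
  simp_rw [h1]
  exact Finset.sum_comm

lemma sum_swap4 {A B C D : Type*} [Fintype A] [Fintype B] [Fintype C] [Fintype D]
    (f : A → B → C → D → ℝ) :
    ∑ a, ∑ b, ∑ c, ∑ d, f a b c d = ∑ d, ∑ a, ∑ b, ∑ c, f a b c d := by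
  have h1 : ∀ a, ∑ b, ∑ c, ∑ d, f a b c d = ∑ d, ∑ b, ∑ c, f a b c d :=
    fun a => sum_swap3 _
  simp_rw [h1]
  exact Finset.sum_comm

/-- linearity of stateDist in the initial distribution -/
lemma stateDist_linear [DecidableEq S] (μ0 : S → ℝ) (P : S → Act → S → ℝ)
    (π : S → Act → ℝ) (t : ℕ) (s' : S) :
    stateDist μ0 P π t s'
      = ∑ s0, μ0 s0 * stateDist (fun x => if x = s0 then 1 else 0) P π t s' := by
  induction t generalizing s' with
  | zero =>
    show μ0 s' = ∑ s0, μ0 s0 * (if s' = s0 then 1 else 0)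
    simp
  | succ t ih =>
    show ∑ s, ∑ a, stateDist μ0 P π t s * π s a * P s a s'
      = ∑ s0, μ0 s0 * ∑ s, ∑ a, stateDist (fun x => if x = s0 then 1 else 0) P π t s * π s a * P s a s'
    simp_rw [ih, Finset.sum_mul, Finset.mul_sum]
    rw [sum_swap3 (f := fun s a s0 => μ0 s0 * stateDist (fun x => if x = s0 then 1 else 0) P π t s * π s a * P s a s')]
    exact Finset.sum_congr rfl fun _ _ => Finset.sum_congr rfl fun _ _ =>
      Finset.sum_congr rfl fun _ _ => by ring

lemma expReward_linear [DecidableEq S] (μ0 : S → ℝ) (P : S → Act → S → ℝ)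
    (r : S → Act → S → ℝ) (π : S → Act → ℝ) (t : ℕ) :
    expReward μ0 P r π t
      = ∑ s0, μ0 s0 * expReward (fun x => if x = s0 then 1 else 0) P r π t := by
  unfold expReward
  simp_rw [stateDist_linear μ0 P π t, Finset.sum_mul, Finset.mul_sum]
  rw [sum_swap4 (f := fun s a s' s0 => μ0 s0 * stateDist (fun x => if x = s0 then 1 else 0) P π t s * π s a * P s a s' * r s a s')]
  exact Finset.sum_congr rfl fun _ _ => Finset.sum_congr rfl fun _ _ =>
    Finset.sum_congr rfl fun _ _ => Finset.sum_congr rfl fun _ _ => by ring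

lemma expReward_shift (μ0 : S → ℝ) (P : S → Act → S → ℝ)
    (r : S → Act → S → ℝ) (π : S → Act → ℝ) (t : ℕ) :
    expReward μ0 P r π (t + 1) = expReward (stepD P π μ0) P r π t := by
  unfold expReward
  rw [stateDist_shift]

lemma isProb_delta [DecidableEq S] (s : S) : IsProb (fun x : S => if x = s then 1 else 0) := by
  constructor
  · intro o; dsimp only; split <;> norm_num
  · simp

lemma exists_rBound [Nonempty S] [Nonempty Act] (r : S → Act → S → ℝ) :
    ∃ R : ℝ, 0 ≤ R ∧ ∀ s a s', |r s a s'| ≤ R := by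
  obtain ⟨R, hR⟩ := Finite.exists_le (fun p : S × Act × S => |r p.1 p.2.1 p.2.2|)
  obtain ⟨s⟩ := (inferInstance : Nonempty S)
  obtain ⟨a⟩ := (inferInstance : Nonempty Act)
  exact ⟨R, le_trans (abs_nonneg _) (hR ⟨s, a, s⟩), fun s a s' => hR ⟨s, a, s'⟩⟩

lemma abs_triple_sum_le (f : S → Act → S → ℝ) :
    |∑ s, ∑ a, ∑ s', f s a s'| ≤ ∑ s, ∑ a, ∑ s', |f s a s'| :=
  le_trans (Finset.abs_sum_le_sum_abs _ _) (Finset.sum_le_sum fun _ _ =>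
    le_trans (Finset.abs_sum_le_sum_abs _ _) (Finset.sum_le_sum fun _ _ =>
      Finset.abs_sum_le_sum_abs _ _))

lemma triple_weight_sum (μ0 : S → ℝ) (hμ0 : IsProb μ0) (P : S → Act → S → ℝ)
    (hP : ∀ s a, IsProb (P s a)) (π : S → Act → ℝ) (hπ : ∀ s, IsProb (π s)) (t : ℕ) :
    ∑ s, ∑ a, ∑ s', stateDist μ0 P π t s * π s a * P s a s' = 1 := by
  rw [sum_swap3 (f := fun s a s' => stateDist μ0 P π t s * π s a * P s a s')]
  exact (stateDist_isProb μ0 hμ0 P hP π hπ (t + 1)).2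

lemma abs_expReward_le (μ0 : S → ℝ) (hμ0 : IsProb μ0) (P : S → Act → S → ℝ)
    (hP : ∀ s a, IsProb (P s a)) (r : S → Act → S → ℝ) (π : S → Act → ℝ)
    (hπ : ∀ s, IsProb (π s)) (t : ℕ) {R : ℝ} (hR : ∀ s a s', |r s a s'| ≤ R) :
    |expReward μ0 P r π t| ≤ R := by
  have hw : ∀ s a s', (0:ℝ) ≤ stateDist μ0 P π t s * π s a * P s a s' := fun s a s' =>
    mul_nonneg (mul_nonneg ((stateDist_isProb μ0 hμ0 P hP π hπ t).1 s) ((hπ s).1 a))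
      ((hP s a).1 s')
  calc |expReward μ0 P r π t|
      ≤ ∑ s, ∑ a, ∑ s', |stateDist μ0 P π t s * π s a * P s a s' * r s a s'| :=
        abs_triple_sum_le _
    _ ≤ ∑ s, ∑ a, ∑ s', stateDist μ0 P π t s * π s a * P s a s' * R := by
        apply Finset.sum_le_sum; intro s _
        apply Finset.sum_le_sum; intro a _
        apply Finset.sum_le_sum; intro s' _
        rw [abs_mul, abs_of_nonneg (hw s a s')]
        exact mul_le_mul_of_nonneg_left (hR s a s') (hw s a s')
    _ = (∑ s, ∑ a, ∑ s', stateDist μ0 P π t s * π s a * P s a s') * R := by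
        simp_rw [Finset.sum_mul]
    _ = R := by rw [triple_weight_sum μ0 hμ0 P hP π hπ t, one_mul]

lemma summable_return (μ0 : S → ℝ) (hμ0 : IsProb μ0) (P : S → Act → S → ℝ)
    (hP : ∀ s a, IsProb (P s a)) (r : S → Act → S → ℝ) (π : S → Act → ℝ)
    (hπ : ∀ s, IsProb (π s)) {γ : ℝ} (hγ0 : 0 ≤ γ) (hγ1 : γ < 1)
    {R : ℝ} (hR : ∀ s a s', |r s a s'| ≤ R) :
    Summable (fun t => γ ^ t * expReward μ0 P r π t) := by
  apply Summable.of_norm_bounded (g := fun t => R * γ ^ t)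
    ((summable_geometric_of_lt_one hγ0 hγ1).mul_left R)
  intro t
  rw [Real.norm_eq_abs, abs_mul, abs_of_nonneg (pow_nonneg hγ0 t), mul_comm]
  exact mul_le_mul_of_nonneg_right (abs_expReward_le μ0 hμ0 P hP r π hπ t hR)
    (pow_nonneg hγ0 t)

lemma abs_expReturn_le (μ0 : S → ℝ) (hμ0 : IsProb μ0) (P : S → Act → S → ℝ)
    (hP : ∀ s a, IsProb (P s a)) (r : S → Act → S → ℝ) (π : S → Act → ℝ)
    (hπ : ∀ s, IsProb (π s)) {γ : ℝ} (hγ0 : 0 ≤ γ) (hγ1 : γ < 1)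
    {R : ℝ} (hR : ∀ s a s', |r s a s'| ≤ R) :
    |expReturn μ0 P r γ π| ≤ R * (1 - γ)⁻¹ := by
  have hsum := summable_return μ0 hμ0 P hP r π hπ hγ0 hγ1 hR
  unfold expReturn
  have h1 : |∑' t, γ ^ t * expReward μ0 P r π t| ≤ ∑' t, |γ ^ t * expReward μ0 P r π t| := by
    have := norm_tsum_le_tsum_norm (f := fun t => γ ^ t * expReward μ0 P r π t) hsum.abs
    simpa only [Real.norm_eq_abs] using this
  refine le_trans h1 (le_trans
    (Summable.tsum_le_tsum ?_ hsum.abs ((summable_geometric_of_lt_one hγ0 hγ1).mul_left R)) ?_)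
  · intro t
    rw [abs_mul, abs_of_nonneg (pow_nonneg hγ0 t), mul_comm]
    exact mul_le_mul_of_nonneg_right (abs_expReward_le μ0 hμ0 P hP r π hπ t hR)
      (pow_nonneg hγ0 t)
  · rw [tsum_mul_left, tsum_geometric_of_lt_one hγ0 hγ1]

lemma expReturn_linear [DecidableEq S] (μ0 : S → ℝ) (P : S → Act → S → ℝ)
    (hP : ∀ s a, IsProb (P s a)) (r : S → Act → S → ℝ) (π : S → Act → ℝ)
    (hπ : ∀ s, IsProb (π s)) {γ : ℝ} (hγ0 : 0 ≤ γ) (hγ1 : γ < 1)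
    [Nonempty S] [Nonempty Act] :
    expReturn μ0 P r γ π
      = ∑ s0, μ0 s0 * expReturn (fun x => if x = s0 then 1 else 0) P r γ π := by
  obtain ⟨R, hR0, hR⟩ := exists_rBound r
  unfold expReturn
  have h1 : ∀ t : ℕ, γ ^ t * expReward μ0 P r π t
      = ∑ s0, μ0 s0 * (γ ^ t * expReward (fun x => if x = s0 then 1 else 0) P r π t) := by
    intro t
    rw [expReward_linear μ0 P r π t, Finset.mul_sum]
    exact Finset.sum_congr rfl fun s0 _ => by ring
  simp_rw [h1]
  rw [Summable.tsum_finsetSum (fun s0 _ =>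
    ((summable_return _ (isProb_delta s0) P hP r π hπ hγ0 hγ1 hR).mul_left (μ0 s0)))]
  exact Finset.sum_congr rfl fun s0 _ => tsum_mul_left

lemma stepD_delta [DecidableEq S] (P : S → Act → S → ℝ) (π : S → Act → ℝ) (s s1 : S) :
    stepD P π (fun x => if x = s then 1 else 0) s1 = ∑ a, π s a * P s a s1 := by
  unfold stepD
  rw [Finset.sum_comm]
  simp [Finset.sum_ite_eq, ite_mul]

lemma valueFun_bellman [DecidableEq S] [Nonempty S] [Nonempty Act]
    (P : S → Act → S → ℝ) (hP : ∀ s a, IsProb (P s a)) (r : S → Act → S → ℝ)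
    {γ : ℝ} (hγ0 : 0 ≤ γ) (hγ1 : γ < 1) (π : S → Act → ℝ) (hπ : ∀ s, IsProb (π s)) (s : S) :
    valueFun P r γ π s = ∑ a, π s a * qFun P r γ π s a := by
  obtain ⟨R, hR0, hR⟩ := exists_rBound r
  have hsum : ∀ μ : S → ℝ, IsProb μ → Summable (fun t => γ ^ t * expReward μ P r π t) :=
    fun μ hμ => summable_return μ hμ P hP r π hπ hγ0 hγ1 hR
  have key : valueFun P r γ π s
      = expReward (fun x => if x = s then 1 else 0) P r π 0
        + ∑ s1, γ * stepD P π (fun x => if x = s then 1 else 0) s1 * valueFun P r γ π s1 := by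
    unfold valueFun expReturn
    rw [Summable.tsum_eq_zero_add (hsum _ (isProb_delta s))]
    rw [pow_zero, one_mul]
    congr 1
    have h2 : ∀ t : ℕ, γ ^ (t + 1) * expReward (fun x => if x = s then 1 else 0) P r π (t + 1)
        = ∑ s1, γ * stepD P π (fun x => if x = s then 1 else 0) s1
            * (γ ^ t * expReward (fun x => if x = s1 then 1 else 0) P r π t) := by
      intro t
      rw [expReward_shift, expReward_linear _ P r π t, Finset.mul_sum]
      exact Finset.sum_congr rfl fun s1 _ => by ring
    simp_rw [h2]
    rw [Summable.tsum_finsetSum (fun s1 _ => ((hsum _ (isProb_delta s1)).mul_left _))]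
    exact Finset.sum_congr rfl fun s1 _ => by
      rw [tsum_mul_left]
  rw [key]
  unfold qFun
  have hER0 : expReward (fun x => if x = s then 1 else 0) P r π 0
      = ∑ a, ∑ s', π s a * P s a s' * r s a s' := by
    unfold expReward
    show ∑ s0, ∑ a, ∑ s', (if s0 = s then (1:ℝ) else 0) * π s0 a * P s0 a s' * r s0 a s' = _
    rw [Finset.sum_eq_single s (fun b _ hb => by simp [hb]) (by simp)]
    simp
  rw [hER0]
  simp only [stepD_delta, Finset.sum_mul, Finset.mul_sum, mul_add, Finset.sum_add_distrib]
  congr 1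
  · exact Finset.sum_congr rfl fun a _ => Finset.sum_congr rfl fun s' _ => by ring
  · rw [Finset.sum_comm]
    exact Finset.sum_congr rfl fun a _ => Finset.sum_congr rfl fun s1 _ => by ring

lemma adv_sum_zero [DecidableEq S] [Nonempty S] [Nonempty Act]
    (P : S → Act → S → ℝ) (hP : ∀ s a, IsProb (P s a)) (r : S → Act → S → ℝ)
    {γ : ℝ} (hγ0 : 0 ≤ γ) (hγ1 : γ < 1) (π : S → Act → ℝ) (hπ : ∀ s, IsProb (π s)) (s : S) :
    ∑ a, π s a * advFun P r γ π s a = 0 := by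
  unfold advFun
  simp_rw [mul_sub]
  rw [Finset.sum_sub_distrib, ← valueFun_bellman P hP r hγ0 hγ1 π hπ s, ← Finset.sum_mul,
    (hπ s).2, one_mul, sub_self]

lemma step_identity [DecidableEq S]
    (μ0 : S → ℝ) (P : S → Act → S → ℝ) (r : S → Act → S → ℝ) (γ : ℝ)
    (πold π : S → Act → ℝ) (hπ : ∀ s, IsProb (π s)) (t : ℕ) :
    ∑ s, stateDist μ0 P π t s * (∑ a, π s a * advFun P r γ πold s a)
      = expReward μ0 P r π t
        + γ * (∑ s', stateDist μ0 P π (t + 1) s' * valueFun P r γ πold s')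
        - ∑ s, stateDist μ0 P π t s * valueFun P r γ πold s := by
  have hbell : ∀ s, (∑ a, π s a * advFun P r γ πold s a)
      = (∑ a, π s a * qFun P r γ πold s a) - valueFun P r γ πold s := by
    intro s
    unfold advFun
    simp_rw [mul_sub]
    rw [Finset.sum_sub_distrib, ← Finset.sum_mul, (hπ s).2, one_mul]
  simp_rw [hbell, mul_sub]
  rw [Finset.sum_sub_distrib]
  congr 1
  show ∑ s, stateDist μ0 P π t s * ∑ a, π s a * qFun P r γ πold s a = _
  unfold qFun expReward
  show _ = ∑ s, ∑ a, ∑ s', stateDist μ0 P π t s * π s a * P s a s' * r s a s'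
      + γ * ∑ s', (∑ s, ∑ a, stateDist μ0 P π t s * π s a * P s a s')
          * valueFun P r γ πold s'
  simp only [Finset.mul_sum, Finset.sum_mul, mul_add, Finset.sum_add_distrib]
  rw [← sum_swap3 (f := fun s a s' => γ * (stateDist μ0 P π t s * π s a * P s a s'
    * valueFun P r γ πold s'))]
  congr 1
  · exact Finset.sum_congr rfl fun _ _ => Finset.sum_congr rfl fun _ _ =>
      Finset.sum_congr rfl fun _ _ => by ring
  · exact Finset.sum_congr rfl fun _ _ => Finset.sum_congr rfl fun _ _ =>
      Finset.sum_congr rfl fun _ _ => by ring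

lemma tsum_telescope' {f : ℕ → ℝ} (hs : Summable (fun t => f (t + 1) - f t))
    (h0 : Tendsto f atTop (𝓝 0)) :
    ∑' t, (f (t + 1) - f t) = - f 0 := by
  have h1 := hs.hasSum.tendsto_sum_nat
  simp only [Finset.sum_range_sub] at h1
  have h2 : Tendsto (fun n => f n - f 0) atTop (𝓝 (0 - f 0)) := h0.sub tendsto_const_nhds
  rw [zero_sub] at h2
  exact tendsto_nhds_unique h1 h2

lemma abs_sum_le_of_prob {μ : S → ℝ} (hμ : IsProb μ) {f : S → ℝ} {B : ℝ}
    (hf : ∀ s, |f s| ≤ B) : |∑ s, μ s * f s| ≤ B := by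
  calc |∑ s, μ s * f s| ≤ ∑ s, |μ s * f s| := Finset.abs_sum_le_sum_abs _ _
    _ ≤ ∑ s, μ s * B := Finset.sum_le_sum fun s _ => by
        rw [abs_mul, abs_of_nonneg (hμ.1 s)]
        exact mul_le_mul_of_nonneg_left (hf s) (hμ.1 s)
    _ = B := by rw [← Finset.sum_mul, hμ.2, one_mul]

lemma return_decomp [DecidableEq S] [Nonempty S] [Nonempty Act]
    (μ0 : S → ℝ) (hμ0 : IsProb μ0) (P : S → Act → S → ℝ) (hP : ∀ s a, IsProb (P s a))
    (r : S → Act → S → ℝ) {γ : ℝ} (hγ0 : 0 ≤ γ) (hγ1 : γ < 1)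
    (πold π : S → Act → ℝ) (hπold : ∀ s, IsProb (πold s)) (hπ : ∀ s, IsProb (π s)) :
    expReturn μ0 P r γ π = expReturn μ0 P r γ πold
      + ∑' t : ℕ, γ ^ t * ∑ s, stateDist μ0 P π t s
          * (∑ a, π s a * advFun P r γ πold s a) := by
  obtain ⟨R, hR0, hR⟩ := exists_rBound r
  set V : S → ℝ := valueFun P r γ πold with hV
  set g : ℕ → ℝ := fun t => γ ^ t * ∑ s, stateDist μ0 P π t s * V s with hg
  have hVb : ∀ s, |V s| ≤ R * (1 - γ)⁻¹ := fun s =>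
    abs_expReturn_le _ (isProb_delta s) P hP r πold hπold hγ0 hγ1 hR
  have hgb : ∀ t, |g t| ≤ R * (1 - γ)⁻¹ * γ ^ t := by
    intro t
    rw [hg]
    dsimp only
    rw [abs_mul, abs_of_nonneg (pow_nonneg hγ0 t), mul_comm]
    exact mul_le_mul_of_nonneg_right
      (abs_sum_le_of_prob (stateDist_isProb μ0 hμ0 P hP π hπ t) hVb) (pow_nonneg hγ0 t)
  have hgsum : Summable g := by
    apply Summable.of_norm_bounded (g := fun t => R * (1 - γ)⁻¹ * γ ^ t)
      ((summable_geometric_of_lt_one hγ0 hγ1).mul_left _)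
    intro t; rw [Real.norm_eq_abs]; exact hgb t
  have hg0 : Tendsto g atTop (𝓝 0) := by
    have hlim := (tendsto_pow_atTop_nhds_zero_of_lt_one hγ0 hγ1).const_mul (R * (1 - γ)⁻¹)
    rw [mul_zero] at hlim
    exact squeeze_zero_norm (fun t => by simpa [Real.norm_eq_abs] using hgb t) hlim
  have hERsum := summable_return μ0 hμ0 P hP r π hπ hγ0 hγ1 hR
  have htel : Summable (fun t => g (t + 1) - g t) := ((summable_nat_add_iff 1).2 hgsum).sub hgsum
  have hA : ∀ t : ℕ, γ ^ t * ∑ s, stateDist μ0 P π t s * (∑ a, π s a * advFun P r γ πold s a)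
      = γ ^ t * expReward μ0 P r π t + (g (t + 1) - g t) := by
    intro t
    rw [step_identity μ0 P r γ πold π hπ t, hg]
    dsimp only
    rw [← hV]
    ring
  have hg0eq : g 0 = expReturn μ0 P r γ πold := by
    rw [hg]
    dsimp only
    rw [pow_zero, one_mul, expReturn_linear μ0 P hP r πold hπold hγ0 hγ1]
    rfl
  calc expReturn μ0 P r γ π
      = (∑' t, γ ^ t * expReward μ0 P r π t) + (∑' t, (g (t + 1) - g t)) + g 0 := by
        rw [tsum_telescope' htel hg0]
        show expReturn μ0 P r γ π = expReturn μ0 P r γ π + -g 0 + g 0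
        ring
    _ = (∑' t, (γ ^ t * expReward μ0 P r π t + (g (t + 1) - g t))) + g 0 := by
        rw [Summable.tsum_add hERsum htel]
    _ = expReturn μ0 P r γ πold
        + ∑' t : ℕ, γ ^ t * ∑ s, stateDist μ0 P π t s
            * (∑ a, π s a * advFun P r γ πold s a) := by
        rw [hg0eq]
        simp_rw [hA]
        ring

lemma visit_decomp (μ0 : S → ℝ) (hμ0 : IsProb μ0) (P : S → Act → S → ℝ)
    (hP : ∀ s a, IsProb (P s a)) {γ : ℝ} (hγ0 : 0 ≤ γ) (hγ1 : γ < 1)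
    (πold : S → Act → ℝ) (hπold : ∀ s, IsProb (πold s)) (A : S → ℝ) :
    ∑ s, visitDist μ0 P γ πold s * A s
      = ∑' t : ℕ, γ ^ t * ∑ s, stateDist μ0 P πold t s * A s := by
  have hd := fun t => stateDist_isProb μ0 hμ0 P hP πold hπold t
  have hsum : ∀ s : S, Summable (fun t => γ ^ t * stateDist μ0 P πold t s * A s) := by
    intro s
    apply Summable.of_norm_bounded (g := fun t => (1 * |A s|) * γ ^ t)
      ((summable_geometric_of_lt_one hγ0 hγ1).mul_left _)
    intro t
    rw [Real.norm_eq_abs, abs_mul, abs_mul, abs_of_nonneg (pow_nonneg hγ0 t),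
      abs_of_nonneg ((hd t).1 s)]
    have h1 : stateDist μ0 P πold t s ≤ 1 := by
      rw [← (hd t).2]
      exact Finset.single_le_sum (fun i _ => (hd t).1 i) (Finset.mem_univ s)
    calc γ ^ t * stateDist μ0 P πold t s * |A s|
        ≤ γ ^ t * 1 * |A s| := by
          apply mul_le_mul_of_nonneg_right _ (abs_nonneg _)
          exact mul_le_mul_of_nonneg_left h1 (pow_nonneg hγ0 t)
      _ = 1 * |A s| * γ ^ t := by ring
  have h1 : ∀ s : S, visitDist μ0 P γ πold s * A s
      = ∑' t : ℕ, γ ^ t * stateDist μ0 P πold t s * A s := by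
    intro s
    unfold visitDist
    rw [← tsum_mul_right]
  simp_rw [h1]
  rw [← Summable.tsum_finsetSum (fun s _ => hsum s)]
  exact tsum_congr fun t => by rw [Finset.mul_sum]; exact Finset.sum_congr rfl fun s _ => by ring

lemma tv_state_bound (μ0 : S → ℝ) (hμ0 : IsProb μ0) (P : S → Act → S → ℝ)
    (hP : ∀ s a, IsProb (P s a)) (πold π : S → Act → ℝ)
    (hπold : ∀ s, IsProb (πold s)) (hπ : ∀ s, IsProb (π s))
    {α : ℝ} (hα0 : 0 ≤ α) (hα : ∀ s, ∑ a, |π s a - πold s a| ≤ 2 * α) :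
    ∀ t : ℕ, ∑ s, |stateDist μ0 P π t s - stateDist μ0 P πold t s| ≤ 2 * t * α := by
  intro t
  induction t with
  | zero => simp [stateDist]
  | succ t ih =>
    have hd := stateDist_isProb μ0 hμ0 P hP π hπ t
    have hdold := stateDist_isProb μ0 hμ0 P hP πold hπold t
    have key : ∑ s', |stateDist μ0 P π (t + 1) s' - stateDist μ0 P πold (t + 1) s'|
        ≤ ∑ s, ∑ a, (|stateDist μ0 P π t s - stateDist μ0 P πold t s| * π s a
            + stateDist μ0 P πold t s * |π s a - πold s a|) := by
      have e1 : ∀ s', |stateDist μ0 P π (t + 1) s' - stateDist μ0 P πold (t + 1) s'|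
          ≤ ∑ s, ∑ a, (|stateDist μ0 P π t s - stateDist μ0 P πold t s| * π s a
              + stateDist μ0 P πold t s * |π s a - πold s a|) * P s a s' := by
        intro s'
        show |(∑ s, ∑ a, stateDist μ0 P π t s * π s a * P s a s')
            - ∑ s, ∑ a, stateDist μ0 P πold t s * πold s a * P s a s'| ≤ _
        rw [← Finset.sum_sub_distrib]
        refine le_trans (Finset.abs_sum_le_sum_abs _ _) (Finset.sum_le_sum fun s _ => ?_)
        rw [← Finset.sum_sub_distrib]
        refine le_trans (Finset.abs_sum_le_sum_abs _ _) (Finset.sum_le_sum fun a _ => ?_)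
        have e2 : stateDist μ0 P π t s * π s a * P s a s'
            - stateDist μ0 P πold t s * πold s a * P s a s'
            = ((stateDist μ0 P π t s - stateDist μ0 P πold t s) * π s a
              + stateDist μ0 P πold t s * (π s a - πold s a)) * P s a s' := by ring
        rw [e2, abs_mul, abs_of_nonneg ((hP s a).1 s')]
        apply mul_le_mul_of_nonneg_right _ ((hP s a).1 s')
        refine le_trans (abs_add_le _ _) ?_
        rw [abs_mul, abs_mul, abs_of_nonneg ((hπ s).1 a), abs_of_nonneg (hdold.1 s)]
      refine le_trans (Finset.sum_le_sum fun s' _ => e1 s') ?_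
      rw [← sum_swap3 (f := fun s a s' =>
        (|stateDist μ0 P π t s - stateDist μ0 P πold t s| * π s a
          + stateDist μ0 P πold t s * |π s a - πold s a|) * P s a s')]
      refine le_of_eq (Finset.sum_congr rfl fun s _ => Finset.sum_congr rfl fun a _ => ?_)
      rw [← Finset.mul_sum, (hP s a).2, mul_one]
    refine le_trans key ?_
    have e3 : ∑ s, ∑ a, (|stateDist μ0 P π t s - stateDist μ0 P πold t s| * π s a
          + stateDist μ0 P πold t s * |π s a - πold s a|)
        = (∑ s, |stateDist μ0 P π t s - stateDist μ0 P πold t s|)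
          + ∑ s, stateDist μ0 P πold t s * ∑ a, |π s a - πold s a| := by
      simp_rw [Finset.sum_add_distrib]
      congr 1
      · exact Finset.sum_congr rfl fun s _ => by rw [← Finset.mul_sum, (hπ s).2, mul_one]
      · exact Finset.sum_congr rfl fun s _ => by rw [Finset.mul_sum]
    rw [e3]
    have e4 : ∑ s, stateDist μ0 P πold t s * ∑ a, |π s a - πold s a| ≤ 2 * α := by
      calc ∑ s, stateDist μ0 P πold t s * ∑ a, |π s a - πold s a|
          ≤ ∑ s, stateDist μ0 P πold t s * (2 * α) :=
            Finset.sum_le_sum fun s _ => mul_le_mul_of_nonneg_left (hα s) (hdold.1 s)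
        _ = 2 * α := by rw [← Finset.sum_mul, hdold.2, one_mul]
    push_cast
    linarith

end Aux

/-- **TRPO policy improvement bound** (Schulman et al. 2015): with
`L_{π_old}(π) = η(π_old) + E_{s∼ρ_{π_old}, a∼π(·|s)}[A^{π_old}(s,a)]` and
`C = 4 max_{s,a} |A^{π_old}(s,a)| γ / (1−γ)²`,
`η(π) ≥ L_{π_old}(π) − C (max_s D_TV(π_old(·|s), π(·|s)))²`. -/
theorem trpo_policy_improvement_bound
    {S Act : Type*} [Fintype S] [Fintype Act] [DecidableEq S]
    [Nonempty S] [Nonempty Act]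
    (μ0 : S → ℝ) (hμ0 : IsProb μ0)
    (P : S → Act → S → ℝ) (hP : ∀ s a, IsProb (P s a))
    (r : S → Act → S → ℝ)
    (γ : ℝ) (hγ0 : 0 ≤ γ) (hγ1 : γ < 1)
    (πold π : S → Act → ℝ)
    (hπold : ∀ s, IsProb (πold s)) (hπ : ∀ s, IsProb (π s))
    (L C : ℝ)
    (hL : L = expReturn μ0 P r γ πold
      + ∑ s, visitDist μ0 P γ πold s * ∑ a, π s a * advFun P r γ πold s a)
    (hC : C = 4 * (⨆ s, ⨆ a, |advFun P r γ πold s a|) * γ / (1 - γ) ^ 2) :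
    expReturn μ0 P r γ π
      ≥ L - C * (⨆ s, tvDist (πold s) (π s)) ^ 2 := by
  set ε := ⨆ s, ⨆ a, |advFun P r γ πold s a| with hεdef
  set α := ⨆ s, tvDist (πold s) (π s) with hαdef
  have hεb : ∀ s a, |advFun P r γ πold s a| ≤ ε := fun s a =>
    le_trans (le_ciSup (f := fun a => |advFun P r γ πold s a|) (Finite.bddAbove_range _) a)
      (le_ciSup (f := fun s => ⨆ a, |advFun P r γ πold s a|) (Finite.bddAbove_range _) s)
  have hε0 : 0 ≤ ε :=
    le_trans (abs_nonneg _) (hεb (Classical.arbitrary S) (Classical.arbitrary Act))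
  have htv : ∀ s, tvDist (πold s) (π s) ≤ α := fun s =>
    le_ciSup (f := fun s => tvDist (πold s) (π s)) (Finite.bddAbove_range _) s
  have htv0 : ∀ s, 0 ≤ tvDist (πold s) (π s) := fun s =>
    mul_nonneg (by norm_num) (Finset.sum_nonneg fun a _ => abs_nonneg _)
  have hα0 : 0 ≤ α := le_trans (htv0 _) (htv (Classical.arbitrary S))
  have h2α : ∀ s, ∑ a, |π s a - πold s a| ≤ 2 * α := by
    intro s
    have he : ∑ a, |π s a - πold s a| = 2 * tvDist (πold s) (π s) := by
      unfold tvDist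
      rw [← mul_assoc]
      norm_num
      exact Finset.sum_congr rfl fun a _ => abs_sub_comm _ _
    rw [he]
    have := htv s
    linarith
  -- bound on the expected advantage
  have hAbb : ∀ s, |∑ a, π s a * advFun P r γ πold s a| ≤ 2 * ε * α := by
    intro s
    have hzero := adv_sum_zero P hP r hγ0 hγ1 πold hπold s
    have he : ∑ a, π s a * advFun P r γ πold s a
        = ∑ a, (π s a - πold s a) * advFun P r γ πold s a := by
      rw [← sub_zero (∑ a, π s a * advFun P r γ πold s a), ← hzero,
        ← Finset.sum_sub_distrib]
      exact Finset.sum_congr rfl fun a _ => by ring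
    rw [he]
    calc |∑ a, (π s a - πold s a) * advFun P r γ πold s a|
        ≤ ∑ a, |(π s a - πold s a) * advFun P r γ πold s a| :=
          Finset.abs_sum_le_sum_abs _ _
      _ ≤ ∑ a, |π s a - πold s a| * ε := Finset.sum_le_sum fun a _ => by
          rw [abs_mul]
          exact mul_le_mul_of_nonneg_left (hεb s a) (abs_nonneg _)
      _ = (∑ a, |π s a - πold s a|) * ε := by rw [Finset.sum_mul]
      _ ≤ (2 * α) * ε := mul_le_mul_of_nonneg_right (h2α s) hε0
      _ = 2 * ε * α := by ring
  have hd := fun t => stateDist_isProb μ0 hμ0 P hP π hπ t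
  have hdold := fun t => stateDist_isProb μ0 hμ0 P hP πold hπold t
  have hsum1 : Summable (fun t => γ ^ t *
      ∑ s, stateDist μ0 P π t s * ∑ a, π s a * advFun P r γ πold s a) := by
    apply Summable.of_norm_bounded (g := fun t => (2 * ε * α) * γ ^ t)
      ((summable_geometric_of_lt_one hγ0 hγ1).mul_left _)
    intro t
    rw [Real.norm_eq_abs, abs_mul, abs_of_nonneg (pow_nonneg hγ0 t), mul_comm]
    exact mul_le_mul_of_nonneg_right (abs_sum_le_of_prob (hd t) hAbb) (pow_nonneg hγ0 t)
  have hsum2 : Summable (fun t => γ ^ t *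
      ∑ s, stateDist μ0 P πold t s * ∑ a, π s a * advFun P r γ πold s a) := by
    apply Summable.of_norm_bounded (g := fun t => (2 * ε * α) * γ ^ t)
      ((summable_geometric_of_lt_one hγ0 hγ1).mul_left _)
    intro t
    rw [Real.norm_eq_abs, abs_mul, abs_of_nonneg (pow_nonneg hγ0 t), mul_comm]
    exact mul_le_mul_of_nonneg_right (abs_sum_le_of_prob (hdold t) hAbb) (pow_nonneg hγ0 t)
  have hdec := return_decomp μ0 hμ0 P hP r hγ0 hγ1 πold π hπold hπ
  have hvd := visit_decomp μ0 hμ0 P hP hγ0 hγ1 πold hπold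
    (fun s => ∑ a, π s a * advFun P r γ πold s a)
  have hLd : L = expReturn μ0 P r γ πold + ∑' t : ℕ, γ ^ t *
      ∑ s, stateDist μ0 P πold t s * ∑ a, π s a * advFun P r γ πold s a := by
    rw [hL, hvd]
  have hXsum : Summable (fun t => γ ^ t * ∑ s,
      (stateDist μ0 P π t s - stateDist μ0 P πold t s)
        * ∑ a, π s a * advFun P r γ πold s a) := by
    apply (hsum1.sub hsum2).congr
    intro t
    rw [← mul_sub, ← Finset.sum_sub_distrib]
    congr 1
    exact Finset.sum_congr rfl fun s _ => by ring
  have hdiff : expReturn μ0 P r γ π - L = ∑' t : ℕ, γ ^ t *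
      ∑ s, (stateDist μ0 P π t s - stateDist μ0 P πold t s)
        * ∑ a, π s a * advFun P r γ πold s a := by
    rw [hdec, hLd,
      show ∀ a b c : ℝ, a + b - (a + c) = b - c from fun a b c => by ring,
      ← Summable.tsum_sub hsum1 hsum2]
    exact tsum_congr fun t => by
      rw [← mul_sub, ← Finset.sum_sub_distrib]
      congr 1
      exact Finset.sum_congr rfl fun s _ => by ring
  have hterm : ∀ t : ℕ, |γ ^ t * ∑ s,
      (stateDist μ0 P π t s - stateDist μ0 P πold t s)
        * ∑ a, π s a * advFun P r γ πold s a| ≤ (4 * ε * α ^ 2) * ((t : ℝ) * γ ^ t) := by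
    intro t
    rw [abs_mul, abs_of_nonneg (pow_nonneg hγ0 t)]
    have h5 : |∑ s, (stateDist μ0 P π t s - stateDist μ0 P πold t s)
        * ∑ a, π s a * advFun P r γ πold s a| ≤ (2 * t * α) * (2 * ε * α) := by
      calc |∑ s, (stateDist μ0 P π t s - stateDist μ0 P πold t s)
            * ∑ a, π s a * advFun P r γ πold s a|
          ≤ ∑ s, |(stateDist μ0 P π t s - stateDist μ0 P πold t s)
            * ∑ a, π s a * advFun P r γ πold s a| := Finset.abs_sum_le_sum_abs _ _
        _ ≤ ∑ s, |stateDist μ0 P π t s - stateDist μ0 P πold t s| * (2 * ε * α) :=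
            Finset.sum_le_sum fun s _ => by
              rw [abs_mul]
              exact mul_le_mul_of_nonneg_left (hAbb s) (abs_nonneg _)
        _ = (∑ s, |stateDist μ0 P π t s - stateDist μ0 P πold t s|) * (2 * ε * α) := by
            rw [Finset.sum_mul]
        _ ≤ (2 * t * α) * (2 * ε * α) := by
            apply mul_le_mul_of_nonneg_right
              (tv_state_bound μ0 hμ0 P hP πold π hπold hπ hα0 h2α t)
            positivity
    calc γ ^ t * |∑ s, (stateDist μ0 P π t s - stateDist μ0 P πold t s)
          * ∑ a, π s a * advFun P r γ πold s a|
        ≤ γ ^ t * ((2 * t * α) * (2 * ε * α)) :=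
          mul_le_mul_of_nonneg_left h5 (pow_nonneg hγ0 t)
      _ = (4 * ε * α ^ 2) * ((t : ℝ) * γ ^ t) := by push_cast; ring
  have hgeo : Summable (fun t : ℕ => (t : ℝ) * γ ^ t) := by
    have := summable_pow_mul_geometric_of_norm_lt_one (R := ℝ) 1
      (r := γ) (by rwa [Real.norm_eq_abs, abs_of_nonneg hγ0])
    simpa using this
  have habs : |expReturn μ0 P r γ π - L| ≤ (4 * ε * α ^ 2) * (γ / (1 - γ) ^ 2) := by
    rw [hdiff]
    have h1 : |∑' t : ℕ, γ ^ t * ∑ s,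
        (stateDist μ0 P π t s - stateDist μ0 P πold t s)
          * ∑ a, π s a * advFun P r γ πold s a|
        ≤ ∑' t : ℕ, |γ ^ t * ∑ s,
          (stateDist μ0 P π t s - stateDist μ0 P πold t s)
            * ∑ a, π s a * advFun P r γ πold s a| := by
      have := norm_tsum_le_tsum_norm (f := fun t : ℕ => γ ^ t * ∑ s,
        (stateDist μ0 P π t s - stateDist μ0 P πold t s)
          * ∑ a, π s a * advFun P r γ πold s a) hXsum.abs
      simpa only [Real.norm_eq_abs] using this
    refine le_trans h1 (le_trans
      (Summable.tsum_le_tsum hterm hXsum.abs (hgeo.mul_left _)) ?_)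
    rw [tsum_mul_left]
    have := tsum_coe_mul_geometric_of_norm_lt_one (𝕜 := ℝ)
      (r := γ) (by rwa [Real.norm_eq_abs, abs_of_nonneg hγ0])
    rw [this]
  have hC2 : C * α ^ 2 = (4 * ε * α ^ 2) * (γ / (1 - γ) ^ 2) := by
    rw [hC]; ring
  have hfin := abs_le.mp habs
  rw [ge_iff_le]
  rw [hC2]
  linarith [hfin.1]
end

section
/- In the one-step (bandit) RL setting, let q∼D be a prompt distribution over a finite set, η(π) = E_{q∼D, o∼π(·|q)}[R(q,o)] for a bounded reward R, π_ref a fixed reference policy, and η'(π) = η(π) − β·E_{q∼D}[D_KL(π(·|q)‖π_ref(·|q))]. Define M(π) = η(π_old) + E_{q∼D, o∼π(·|q)}[A^{π_old}(q,o)] − E_{q∼D}[λ·D_KL(π(·|q)‖π_old(·|q)) + β·D_KL(π(·|q)‖π_ref(·|q))], where A^{π_old}(q,o) = R(q,o) − E_{o'∼π_old(·|q)}[R(q,o')]. If π* maximizes M over all policies, then η'(π*) ≥ η'(π_old), provided the improvement-bound constant satisfies C ≤ λ (in the one-step setting one may verify this directly since η(π) = η(π_old) + E_{q,o∼π}[A^{π_old}(q,o)]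 exactly). -/
noncomputable def klDiv {O : Type*} [Fintype O] (p q : O → ℝ) : ℝ :=
  ∑ o, p o * Real.log (p o / q o)

lemma klDiv_nonneg {O : Type*} [Fintype O] (p q : O → ℝ)
    (hp : IsProb p) (hq : IsProb q) (hqpos : ∀ o, 0 < q o) :
    0 ≤ klDiv p q := by
  have key : ∀ o, p o - q o ≤ p o * Real.log (p o / q o) := by
    intro o
    rcases eq_or_lt_of_le (hp.1 o) with h0 | hpos
    · simp [← h0]
      linarith [(hqpos o).le]
    · have hlog : Real.log (q o / p o) ≤ q o / p o - 1 :=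
        Real.log_le_sub_one_of_pos (div_pos (hqpos o) hpos)
      have h1 : p o * Real.log (q o / p o) ≤ p o * (q o / p o - 1) :=
        mul_le_mul_of_nonneg_left hlog hpos.le
      have h2 : p o * (q o / p o - 1) = q o - p o := by field_simp
      have h3 : Real.log (p o / q o) = - Real.log (q o / p o) := by
        rw [Real.log_div hpos.ne' (hqpos o).ne', Real.log_div (hqpos o).ne' hpos.ne']; ring
      rw [h3]
      nlinarith
  have : ∑ o, (p o - q o) ≤ klDiv p q := Finset.sum_le_sum fun o _ => key o
  rwa [Finset.sum_sub_distrib, hp.2, hq.2, sub_self] at this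

lemma klDiv_self {O : Type*} [Fintype O] (p : O → ℝ) : klDiv p p = 0 := by
  unfold klDiv
  apply Finset.sum_eq_zero
  intro o _
  rcases eq_or_ne (p o) 0 with h | h
  · simp [h]
  · simp [div_self h]

/-- One-step (bandit) expected reward `η(π) = E_{q∼D, o∼π(·|q)}[R(q,o)]`. -/
def eta {Q O : Type*} [Fintype Q] [Fintype O]
    (D : Q → ℝ) (R : Q → O → ℝ) (π : Q → O → ℝ) : ℝ :=
  ∑ q, D q * ∑ o, π q o * R q o

/-- Monotonic improvement for reverse-KL-regularized policy optimization in the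
one-step (bandit) setting: if `π*` maximizes the regularized surrogate `M`, then
the reference-regularized objective `η'` does not decrease: `η'(π*) ≥ η'(π_old)`. -/
theorem bandit_reverse_kl_monotonic_improvement
    {Q O : Type*} [Fintype Q] [Fintype O]
    (D : Q → ℝ) (hD : IsProb D)
    (R : Q → O → ℝ)
    (πold πref πstar : Q → O → ℝ)
    (hπold : ∀ q, IsProb (πold q)) (hπref : ∀ q, IsProb (πref q))
    (hπstar : ∀ q, IsProb (πstar q))
    (holdpos : ∀ q o, 0 < πold q o) (hrefpos : ∀ q o, 0 < πref q o)
    (lam β : ℝ) (hlam : 0 ≤ lam) (hβ : 0 ≤ β)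
    (A : Q → O → ℝ)
    (hA : ∀ q o, A q o = R q o - ∑ o', πold q o' * R q o')
    (M : (Q → O → ℝ) → ℝ)
    (hM : ∀ π, M π
      = eta D R πold + (∑ q, D q * ∑ o, π q o * A q o)
        - ∑ q, D q * (lam * klDiv (π q) (πold q) + β * klDiv (π q) (πref q)))
    (hmax : ∀ π : Q → O → ℝ, (∀ q, IsProb (π q)) → M π ≤ M πstar) :
    eta D R πold - β * ∑ q, D q * klDiv (πold q) (πref q)
      ≤ eta D R πstar - β * ∑ q, D q * klDiv (πstar q) (πref q) := by
  -- advantage expectation for any policy π: ∑ o, π q o * A q o = (∑ o, π q o * R q o) - ∑ o', πold q o' * R q o'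
  have hadv : ∀ (π : Q → O → ℝ), (∀ q, IsProb (π q)) → ∀ q,
      ∑ o, π q o * A q o = (∑ o, π q o * R q o) - ∑ o', πold q o' * R q o' := by
    intro π hπ q
    have : ∀ o, π q o * A q o = π q o * R q o - π q o * (∑ o', πold q o' * R q o') := by
      intro o; rw [hA]; ring
    rw [Finset.sum_congr rfl fun o _ => this o, Finset.sum_sub_distrib,
      ← Finset.sum_mul, (hπ q).2, one_mul]
  -- M πold = η'(πold)
  have hMold : M πold = eta D R πold - β * ∑ q, D q * klDiv (πold q) (πref q) := by
    rw [hM]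
    have h1 : ∀ q, ∑ o, πold q o * A q o = 0 := by
      intro q; rw [hadv πold hπold q, sub_self]
    simp only [h1, mul_zero, Finset.sum_const_zero, add_zero, klDiv_self, mul_zero, zero_add]
    rw [Finset.mul_sum]
    congr 1
    apply Finset.sum_congr rfl
    intro q _; ring
  -- η(πstar) = η(πold) + ∑ q, D q * ∑ o, πstar q o * A q o
  have hetastar : eta D R πstar = eta D R πold + ∑ q, D q * ∑ o, πstar q o * A q o := by
    unfold eta
    rw [← Finset.sum_add_distrib]
    apply Finset.sum_congr rfl
    intro q _
    rw [hadv πstar hπstar q]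
    ring
  -- KL regularizer nonneg
  have hklnn : 0 ≤ lam * ∑ q, D q * klDiv (πstar q) (πold q) := by
    apply mul_nonneg hlam
    apply Finset.sum_nonneg
    intro q _
    exact mul_nonneg (hD.1 q) (klDiv_nonneg _ _ (hπstar q) (hπold q) (holdpos q))
  have hMstar : M πstar
      = eta D R πstar - β * ∑ q, D q * klDiv (πstar q) (πref q)
        - lam * ∑ q, D q * klDiv (πstar q) (πold q) := by
    rw [hM, hetastar]
    rw [show (∑ q, D q * (lam * klDiv (πstar q) (πold q) + β * klDiv (πstar q) (πref q)))
        = lam * ∑ q, D q * klDiv (πstar q) (πold q)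
          + β * ∑ q, D q * klDiv (πstar q) (πref q) by
      rw [Finset.mul_sum, Finset.mul_sum, ← Finset.sum_add_distrib]
      apply Finset.sum_congr rfl; intro q _; ring]
    ring
  have := hmax πold hπold
  rw [hMold, hMstar] at this
  linarith
end
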